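/- For $n\ge 5$, $\dim H^2(\mathfrak{m}_2(n);\mathbb{K})=3$, with basis given by the cohomology classes of $e^1\wedge e^n + e^2\wedge e^{n-1}$, $e^2\wedge e^3$, and $e^2\wedge e^5 - e^3\wedge e^4$. -/

import Mathlib

/-- Structure constants of `𝔪₂(n)` with respect to the (zero-based) basis
`e₁, …, eₙ`: `[e₁, eᵢ] = e_{i+1}` for `2 ≤ i ≤ n-1` and `[e₂, eⱼ] = e_{j+2}` for
`3 ≤ j ≤ n-2`, all other brackets zero. -/
def m2c (K : Type*) [Field K] (n : ℕ) (i j l : Fin n) : K :=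
  ((if i.val = 0 ∧ 1 ≤ j.val ∧ l.val = j.val + 1 then 1 else 0)
    + (if i.val = 1 ∧ 2 ≤ j.val ∧ l.val = j.val + 2 then 1 else 0))
  - ((if j.val = 0 ∧ 1 ≤ i.val ∧ l.val = i.val + 1 then 1 else 0)
    + (if j.val = 1 ∧ 2 ≤ i.val ∧ l.val = i.val + 2 then 1 else 0))

/-- Chevalley–Eilenberg closedness for a 2-cochain on `𝔪₂(n)` given by its matrix. -/
def m2Closed (K : Type*) [Field K] (n : ℕ) (a : Fin n → Fin n → K) : Prop :=
  ∀ i j l : Fin n,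
    (∑ m, m2c K n i j m * a m l) + (∑ m, m2c K n j l m * a m i)
      + (∑ m, m2c K n l i m * a m j) = 0

/-- The matrices of the three cocycles `e¹∧eⁿ + e²∧e^{n-1}`, `e²∧e³` and
`e²∧e⁵ - e³∧e⁴` (zero-based indices). -/
def m2Omega (K : Type*) [Field K] (n : ℕ) (k : Fin 3) (p q : Fin n) : K :=
  if k.val = 0 then
    (if (p.val = 0 ∧ q.val = n - 1) ∨ (p.val = 1 ∧ q.val = n - 2) then 1
     else if (q.val = 0 ∧ p.val = n - 1) ∨ (q.val = 1 ∧ p.val = n - 2) then -1 else 0)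
  else if k.val = 1 then
    (if p.val = 1 ∧ q.val = 2 then 1 else if p.val = 2 ∧ q.val = 1 then -1 else 0)
  else
    (if p.val = 1 ∧ q.val = 4 then 1 else if p.val = 4 ∧ q.val = 1 then -1
     else if p.val = 2 ∧ q.val = 3 then -1 else if p.val = 3 ∧ q.val = 2 then 1 else 0)

set_option linter.unusedSectionVars false

namespace Stmt10Aux

variable {K : Type*} [Field K] {n : ℕ}

/-- nat-indexed matrix entry -/
def AA (a : Fin n → Fin n → K) (p q : ℕ) : K :=
  if h : p < n ∧ q < n then a ⟨p, h.1⟩ ⟨q, h.2⟩ else 0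

lemma AA_self (a : Fin n → Fin n → K) (i j : Fin n) : AA a i.val j.val = a i j := by
  unfold AA
  rw [dif_pos ⟨i.isLt, j.isLt⟩]

lemma AA_zero {a : Fin n → Fin n → K} {p q : ℕ} (h : ¬(p < n ∧ q < n)) : AA a p q = 0 :=
  dif_neg h

lemma AA_anti {a : Fin n → Fin n → K} (hs : ∀ i j, a i j = -a j i) (p q : ℕ) :
    AA a p q = -AA a q p := by
  unfold AA
  by_cases h : p < n ∧ q < n
  · rw [dif_pos h, dif_pos ⟨h.2, h.1⟩]; exact hs _ _
  · rw [dif_neg h, dif_neg (fun h' => h ⟨h'.2, h'.1⟩), neg_zero]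

lemma AA_diag [CharZero K] {a : Fin n → Fin n → K} (hs : ∀ i j, a i j = -a j i) (p : ℕ) :
    AA a p p = 0 := by
  have h := AA_anti hs p p
  have h2 : (2:K) * AA a p p = 0 := by linear_combination h
  exact (mul_eq_zero.mp h2).resolve_left two_ne_zero

lemma pickSum (P Q : Prop) [Decidable P] [Decidable Q] (v : ℕ) (g : Fin n → K) :
    (∑ m : Fin n, (if P ∧ Q ∧ m.val = v then (1:K) else 0) * g m)
      = if P ∧ Q then (if h : v < n then g ⟨v, h⟩ else 0) else 0 := by
  by_cases hPQ : P ∧ Q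
  · rw [if_pos hPQ]
    by_cases hv : v < n
    · rw [dif_pos hv]
      rw [Finset.sum_eq_single (⟨v, hv⟩ : Fin n)]
      · rw [if_pos ⟨hPQ.1, hPQ.2, rfl⟩, one_mul]
      · intro m _ hm
        rw [if_neg, zero_mul]
        rintro ⟨-, -, hmv⟩
        exact hm (Fin.ext hmv)
      · intro h; exact absurd (Finset.mem_univ _) h
    · rw [dif_neg hv]
      apply Finset.sum_eq_zero
      intro m _
      rw [if_neg, zero_mul]
      rintro ⟨-, -, hmv⟩
      exact hv (hmv ▸ m.isLt)
  · rw [if_neg hPQ]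
    apply Finset.sum_eq_zero
    intro m _
    rw [if_neg, zero_mul]
    rintro ⟨h1, h2, -⟩
    exact hPQ ⟨h1, h2⟩

lemma bracketSum1 (i j : Fin n) (g : Fin n → K) :
    (∑ m, m2c K n i j m * g m)
      = ((if i.val = 0 ∧ 1 ≤ j.val then (if h : j.val + 1 < n then g ⟨j.val + 1, h⟩ else 0) else 0)
        + (if i.val = 1 ∧ 2 ≤ j.val then (if h : j.val + 2 < n then g ⟨j.val + 2, h⟩ else 0) else 0))
        - ((if j.val = 0 ∧ 1 ≤ i.val then (if h : i.val + 1 < n then g ⟨i.val + 1, h⟩ else 0) else 0)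
        + (if j.val = 1 ∧ 2 ≤ i.val then (if h : i.val + 2 < n then g ⟨i.val + 2, h⟩ else 0) else 0)) := by
  unfold m2c
  simp only [sub_mul, add_mul]
  rw [Finset.sum_sub_distrib, Finset.sum_add_distrib, Finset.sum_add_distrib]
  rw [pickSum, pickSum, pickSum, pickSum]

lemma bracketSum2 (a : Fin n → Fin n → K) (i j l : Fin n) :
    (∑ m, m2c K n i j m * a m l)
      = ((if i.val = 0 ∧ 1 ≤ j.val then AA a (j.val + 1) l.val else 0)
        + (if i.val = 1 ∧ 2 ≤ j.val then AA a (j.val + 2) l.val else 0))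
        - ((if j.val = 0 ∧ 1 ≤ i.val then AA a (i.val + 1) l.val else 0)
        + (if j.val = 1 ∧ 2 ≤ i.val then AA a (i.val + 2) l.val else 0)) := by
  have hAA : ∀ v : ℕ, AA a v l.val = (if h : v < n then a ⟨v, h⟩ l else 0) := by
    intro v
    unfold AA
    by_cases hv : v < n
    · rw [dif_pos ⟨hv, l.isLt⟩, dif_pos hv]
    · rw [dif_neg (fun h' => hv h'.1), dif_neg hv]
  simp only [hAA]
  exact bracketSum1 i j (fun m => a m l)


variable [CharZero K]

lemma relA {a : Fin n → Fin n → K} (hc : m2Closed K n a) (hs : ∀ i j, a i j = -a j i)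
    (hn : 5 ≤ n) (l : ℕ) (h2 : 2 ≤ l) (hl : l < n) :
    AA a 2 l - AA a 0 (l + 2) + AA a 1 (l + 1) = 0 := by
  have h := hc ⟨0, by omega⟩ ⟨1, by omega⟩ ⟨l, hl⟩
  rw [bracketSum2, bracketSum2, bracketSum2] at h
  have e0 : l ≠ 0 := by omega
  have e1 : l ≠ 1 := by omega
  have h1 : 1 ≤ l := by omega
  simp [e0, e1, h1, h2] at h
  linear_combination h - AA_anti hs (l + 2) 0 + AA_anti hs (l + 1) 1

lemma relB {a : Fin n → Fin n → K} (hc : m2Closed K n a) (hs : ∀ i j, a i j = -a j i)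
    (j l : ℕ) (h2 : 2 ≤ j) (hjl : j < l) (hl : l < n) :
    AA a (j + 1) l + AA a j (l + 1) = 0 := by
  have h := hc ⟨0, by omega⟩ ⟨j, by omega⟩ ⟨l, hl⟩
  rw [bracketSum2, bracketSum2, bracketSum2] at h
  have ej0 : j ≠ 0 := by omega
  have ej1 : j ≠ 1 := by omega
  have el0 : l ≠ 0 := by omega
  have el1 : l ≠ 1 := by omega
  have h1j : 1 ≤ j := by omega
  have h1l : 1 ≤ l := by omega
  simp [ej0, ej1, el0, el1, h1j, h1l] at h
  linear_combination h + AA_anti hs (l + 1) j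

lemma relC {a : Fin n → Fin n → K} (hc : m2Closed K n a) (hs : ∀ i j, a i j = -a j i)
    (j l : ℕ) (h2 : 2 ≤ j) (hjl : j < l) (hl : l < n) :
    AA a (j + 2) l + AA a j (l + 2) = 0 := by
  have h := hc ⟨1, by omega⟩ ⟨j, by omega⟩ ⟨l, hl⟩
  rw [bracketSum2, bracketSum2, bracketSum2] at h
  have ej0 : j ≠ 0 := by omega
  have ej1 : j ≠ 1 := by omega
  have el0 : l ≠ 0 := by omega
  have el1 : l ≠ 1 := by omega
  have h2j : 2 ≤ j := h2
  have h2l : 2 ≤ l := by omega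
  simp [ej0, ej1, el0, el1, h2j, h2l] at h
  linear_combination h + AA_anti hs (l + 2) j


lemma col_zero {a : Fin n → Fin n → K} (hc : m2Closed K n a) (hs : ∀ i j, a i j = -a j i)
    (hn : 5 ≤ n) (p : ℕ) (hp : 2 ≤ p) : AA a p (n - 1) = 0 := by
  by_cases hpn : p < n
  · rcases eq_or_lt_of_le hp with h2 | h3
    · subst h2
      have h := relA hc hs hn (n - 1) (by omega) (by omega)
      have z1 : AA a 0 (n - 1 + 2) = 0 := AA_zero (by omega)
      have z2 : AA a 1 (n - 1 + 1) = 0 := AA_zero (by omega)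
      linear_combination h + z1 - z2
    · have h := relB hc hs (p - 1) (n - 1) (by omega) (by omega) (by omega)
      rw [show p - 1 + 1 = p by omega] at h
      have z : AA a (p - 1) (n - 1 + 1) = 0 := AA_zero (by omega)
      linear_combination h - z
  · exact AA_zero (by omega)

lemma row2_zero {a : Fin n → Fin n → K} (hc : m2Closed K n a) (hs : ∀ i j, a i j = -a j i)
    (hn : 5 ≤ n) (t : ℕ) (ht : 4 ≤ t) : AA a 2 t = 0 := by
  by_cases htn : t < n
  · by_cases h4 : t = 4
    · subst h4
      have h := relB hc hs 2 3 (by omega) (by omega) (by omega)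
      have d := AA_diag hs 3
      linear_combination h - d
    · by_cases h5 : t = 5
      · subst h5
        have hC := relC hc hs 2 3 (by omega) (by omega) (by omega)
        have hB := relB hc hs 2 4 (by omega) (by omega) (by omega)
        have e := AA_anti hs 4 3
        linear_combination (hC + hB - e) / 2
      · by_cases h6 : t = 6
        · subst h6
          have hC := relC hc hs 2 4 (by omega) (by omega) (by omega)
          have d := AA_diag hs 4
          linear_combination hC - d
        · -- t ≥ 7
          have hC := relC hc hs 2 (t - 2) (by omega) (by omega) (by omega)
          rw [show t - 2 + 2 = t by omega] at hC
          have hB1 := relB hc hs 3 (t - 2) (by omega) (by omega) (by omega)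
          rw [show t - 2 + 1 = t - 1 by omega] at hB1
          have hB2 := relB hc hs 2 (t - 1) (by omega) (by omega) (by omega)
          rw [show t - 1 + 1 = t by omega] at hB2
          linear_combination (hC - hB1 + hB2) / 2
  · exact AA_zero (by omega)

lemma region_zero {a : Fin n → Fin n → K} (hc : m2Closed K n a) (hs : ∀ i j, a i j = -a j i)
    (hn : 5 ≤ n) : ∀ (k p q : ℕ), n - q ≤ k → 3 ≤ p → p ≤ q → AA a p q = 0 := by
  intro k
  induction k with
  | zero => intro p q hk _ _; exact AA_zero (by omega)
  | succ k ih =>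
    intro p q hk hp hpq
    by_cases hq : q < n
    · by_cases hq1 : q = n - 1
      · subst hq1; exact col_zero hc hs hn p (by omega)
      · have hB := relB hc hs (p - 1) q (by omega) (by omega) hq
        rw [show p - 1 + 1 = p by omega] at hB
        have hz : AA a (p - 1) (q + 1) = 0 := by
          by_cases hp3 : p = 3
          · subst hp3; exact row2_zero hc hs hn (q + 1) (by omega)
          · exact ih (p - 1) (q + 1) (by omega) (by omega) (by omega)
        linear_combination hB - hz
    · exact AA_zero (by omega)

lemma regionAll {a : Fin n → Fin n → K} (hc : m2Closed K n a) (hs : ∀ i j, a i j = -a j i)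
    (hn : 5 ≤ n) (p q : ℕ) (hp : 2 ≤ p) (hpq : p < q) (hne : ¬(p = 2 ∧ q = 3)) :
    AA a p q = 0 := by
  by_cases hp2 : p = 2
  · subst hp2; exact row2_zero hc hs hn q (by omega)
  · exact region_zero hc hs hn (n - q) p q le_rfl (by omega) (by omega)


def EE (a : Fin n → Fin n → K) (i j l : Fin n) : K :=
  (∑ m, m2c K n i j m * a m l) + (∑ m, m2c K n j l m * a m i)
    + ∑ m, m2c K n l i m * a m j

lemma m2c_swap (i j l : Fin n) : m2c K n j i l = -m2c K n i j l := by
  unfold m2c; ring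

lemma sum_swap (a : Fin n → Fin n → K) (i j l : Fin n) :
    (∑ m, m2c K n j i m * a m l) = -∑ m, m2c K n i j m * a m l := by
  rw [← Finset.sum_neg_distrib]
  exact Finset.sum_congr rfl fun m _ => by rw [m2c_swap]; ring

lemma EE_swap12 (a : Fin n → Fin n → K) (i j l : Fin n) :
    EE a j i l = -EE a i j l := by
  unfold EE
  rw [sum_swap a j i l, sum_swap a i l j, sum_swap a l j i]
  ring

lemma EE_swap23 (a : Fin n → Fin n → K) (i j l : Fin n) :
    EE a i l j = -EE a i j l := by
  unfold EE
  rw [sum_swap a i l j, sum_swap a l j i, sum_swap a j i l]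
  ring

lemma EE_zero_of_eq23 (a : Fin n → Fin n → K) (i j : Fin n) : EE a i j j = 0 := by
  have h := EE_swap23 a i j j
  have h2 : (2:K) * EE a i j j = 0 := by linear_combination h
  exact (mul_eq_zero.mp h2).resolve_left two_ne_zero

lemma EE_zero_of_eq12 (a : Fin n → Fin n → K) (i l : Fin n) : EE a i i l = 0 := by
  have h := EE_swap12 a i i l
  have h2 : (2:K) * EE a i i l = 0 := by linear_combination h
  exact (mul_eq_zero.mp h2).resolve_left two_ne_zero

lemma closed_of_sorted (a : Fin n → Fin n → K)
    (hsort : ∀ i j l : Fin n, i.val < j.val → j.val < l.val → EE a i j l = 0) :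
    m2Closed K n a := by
  intro i j l
  show EE a i j l = 0
  rcases lt_trichotomy i.val j.val with hij | hij | hij
  · rcases lt_trichotomy j.val l.val with hjl | hjl | hjl
    · exact hsort i j l hij hjl
    · have : j = l := Fin.ext hjl
      subst this; exact EE_zero_of_eq23 a i j
    · rcases lt_trichotomy i.val l.val with hil | hil | hil
      · rw [EE_swap23 a i l j, hsort i l j hil hjl, neg_zero]
      · have : i = l := Fin.ext hil
        subst this
        rw [EE_swap12 a j i i, EE_zero_of_eq23 a j i, neg_zero]
      · rw [EE_swap23 a i l j, EE_swap12 a l i j, hsort l i j hil hij, neg_zero, neg_zero]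
  · have : i = j := Fin.ext hij
    subst this; exact EE_zero_of_eq12 a i l
  · rcases lt_trichotomy i.val l.val with hil | hil | hil
    · rw [EE_swap12 a j i l, hsort j i l hij hil, neg_zero]
    · have : i = l := Fin.ext hil
      subst this
      rw [EE_swap12 a j i i, EE_zero_of_eq23 a j i, neg_zero]
    · rcases lt_trichotomy j.val l.val with hjl | hjl | hjl
      · rw [EE_swap12 a j i l, EE_swap23 a j l i, hsort j l i hjl hil, neg_zero, neg_zero]
      · have : j = l := Fin.ext hjl
        subst this; exact EE_zero_of_eq23 a i j
      · rw [EE_swap12 a j i l, EE_swap23 a j l i, EE_swap12 a l j i, hsort l j i hjl hij,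
          neg_zero, neg_zero, neg_zero]


set_option maxHeartbeats 1000000 in
lemma om_zero (k : Fin 3) (p q : ℕ) (hp : 3 ≤ p) (hq : 2 ≤ q) (hne : ¬(p = 3 ∧ q = 2)) :
    AA (m2Omega K n k) p q = 0 := by
  unfold AA m2Omega
  simp only [Fin.val_mk]
  split_ifs <;> first | rfl | omega | simp_all | (norm_num; done)

set_option maxHeartbeats 1000000 in
lemma om_row2 (hn : 5 ≤ n) (k : Fin 3) (q : ℕ) (hq : 2 ≤ q) :
    AA (m2Omega K n k) 2 q = if k.val = 2 ∧ q = 3 then -1 else 0 := by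
  unfold AA m2Omega
  simp only [Fin.val_mk]
  split_ifs <;> first | rfl | omega | simp_all | (norm_num; done)

set_option maxHeartbeats 1000000 in
lemma om_col0 (hn : 5 ≤ n) (k : Fin 3) (p : ℕ) (hp : 2 ≤ p) :
    AA (m2Omega K n k) p 0 = if k.val = 0 ∧ p = n - 1 then -1 else 0 := by
  have h5 : 0 < n ∨ n = 0 := by omega
  unfold AA m2Omega
  simp only [Fin.val_mk]
  split_ifs <;> first | rfl | omega | simp_all | (norm_num; done)

set_option maxHeartbeats 1000000 in
lemma om_col1 (hn : 5 ≤ n) (k : Fin 3) (p : ℕ) (hp : 3 ≤ p) :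
    AA (m2Omega K n k) p 1
      = if k.val = 0 ∧ p = n - 2 then -1 else if k.val = 2 ∧ p = 4 then -1 else 0 := by
  unfold AA m2Omega
  simp only [Fin.val_mk]
  split_ifs <;> first | rfl | omega | simp_all | (norm_num; done)

lemma omega_closed (hn : 5 ≤ n) (k : Fin 3) : m2Closed K n (m2Omega K n k) := by
  apply closed_of_sorted
  intro i j l hij hjl
  show EE (m2Omega K n k) i j l = 0
  unfold EE
  rw [bracketSum2, bracketSum2, bracketSum2]
  have hln := l.isLt
  by_cases hi0 : i.val = 0
  · by_cases hj1 : j.val = 1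
    · have hl2 : 2 ≤ l.val := by omega
      have hl1' : 1 ≤ l.val := by omega
      have hl0 : ¬ l.val = 0 := by omega
      have hl1 : ¬ l.val = 1 := by omega
      have hj0 : ¬ j.val = 0 := by omega
      have hi1 : ¬ i.val = 1 := by omega
      simp only [hi0, hj1, hj0, hl0, hl1, hi1, hl2, hl1']
      norm_num
      rw [om_row2 hn k l.val hl2, om_col0 hn k (l.val + 2) (by omega), om_col1 hn k (l.val + 1) (by omega)]
      split_ifs <;> first | omega | (norm_num; done) | simp_all
    · have hj2 : 2 ≤ j.val := by omega
      have hl2 : 2 ≤ l.val := by omega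
      have hj1' : 1 ≤ j.val := by omega
      have hl1' : 1 ≤ l.val := by omega
      have hj0 : ¬ j.val = 0 := by omega
      have hl0 : ¬ l.val = 0 := by omega
      have hl1 : ¬ l.val = 1 := by omega
      have hi1 : ¬ i.val = 1 := by omega
      simp only [hi0, hj1, hj0, hl0, hl1, hi1, hj2, hl2, hj1', hl1']
      norm_num
      rw [om_zero k (j.val + 1) l.val (by omega) (by omega) (by omega),
        om_zero k (l.val + 1) j.val (by omega) (by omega) (by omega)]
      ring
  · by_cases hi1 : i.val = 1
    · have hj2 : 2 ≤ j.val := by omega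
      have hl2 : 2 ≤ l.val := by omega
      have hj0 : ¬ j.val = 0 := by omega
      have hj1 : ¬ j.val = 1 := by omega
      have hl0 : ¬ l.val = 0 := by omega
      have hl1 : ¬ l.val = 1 := by omega
      simp only [hi0, hi1, hj0, hj1, hl0, hl1, hj2, hl2]
      norm_num
      rw [om_zero k (j.val + 2) l.val (by omega) (by omega) (by omega),
        om_zero k (l.val + 2) j.val (by omega) (by omega) (by omega)]
      ring
    · have h3 : ¬ j.val = 0 := by omega
      have h4 : ¬ j.val = 1 := by omega
      have h5 : ¬ l.val = 0 := by omega
      have h6 : ¬ l.val = 1 := by omega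
      simp [hi0, hi1, h3, h4, h5, h6]

lemma om0_def (p q : Fin n) : m2Omega K n 0 p q
    = if (p.val = 0 ∧ q.val = n - 1) ∨ (p.val = 1 ∧ q.val = n - 2) then 1
      else if (q.val = 0 ∧ p.val = n - 1) ∨ (q.val = 1 ∧ p.val = n - 2) then -1 else 0 := by
  simp [m2Omega]

lemma om1_def (p q : Fin n) : m2Omega K n 1 p q
    = if p.val = 1 ∧ q.val = 2 then 1 else if p.val = 2 ∧ q.val = 1 then -1 else 0 := by
  simp [m2Omega]

lemma om2_def (p q : Fin n) : m2Omega K n 2 p q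
    = if p.val = 1 ∧ q.val = 4 then 1 else if p.val = 4 ∧ q.val = 1 then -1
      else if p.val = 2 ∧ q.val = 3 then -1 else if p.val = 3 ∧ q.val = 2 then 1 else 0 := by
  simp [m2Omega]

lemma key_lt (hn : 5 ≤ n) (a : Fin n → Fin n → K) (hs : ∀ i j, a i j = -a j i)
    (hc : m2Closed K n a) (i j : Fin n) (hij : i.val < j.val) :
    a i j = ((AA a 0 (n - 1)) * m2Omega K n 0 i j
        + (AA a 1 2 - AA a 0 3) * m2Omega K n 1 i j
        + (-AA a 2 3) * m2Omega K n 2 i j)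
      + ∑ m, m2c K n i j m * (fun m : Fin n => if 2 ≤ m.val then AA a 0 (m.val - 1) else 0) m := by
  have hjn := j.isLt
  have hin := i.isLt
  rw [← AA_self a i j, bracketSum1, om0_def, om1_def, om2_def]
  by_cases hi0 : i.val = 0
  · have hj1' : 1 ≤ j.val := by omega
    by_cases hjn1 : j.val = n - 1
    · simp [hi0, hjn1, show ¬(n - 1 + 1 < n) from by omega, show (1:ℕ) ≤ n - 1 from by omega,
        show ¬((n:ℕ) - 1 = 0) from by omega, show ¬((n:ℕ) - 1 = 1) from by omega]
    · have hjj : j.val + 1 < n := by omega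
      simp [hi0, hjn1, hj1', hjj, show ¬(j.val = 0) from by omega,
        show ¬(j.val = 1 ∧ 0 = n - 2) from by omega, show 2 ≤ j.val + 1 from by omega]
  · by_cases hi1 : i.val = 1
    · have hj2 : 2 ≤ j.val := by omega
      by_cases e2 : j.val = 2
      · simp [hi1, e2, show ¬((2:ℕ) = n - 2) from by omega, show (4:ℕ) < n from by omega]
      · by_cases e3 : j.val = 3
        · have hA := relA hc hs hn 2 (le_refl 2) (by omega)
          have hd := AA_diag hs 2
          by_cases h5 : n = 5
          · subst h5
            simp [hi1, e3]
            linear_combination hA - hd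
          · simp [hi1, e3, show ¬((3:ℕ) = n - 2) from by omega, show 3 + 2 < n from by omega]
            linear_combination hA - hd
        · by_cases e4 : j.val = 4
          · have hA := relA hc hs hn 3 (by omega) (by omega)
            by_cases h5 : n = 5
            · subst h5
              have z : AA a 0 5 = 0 := AA_zero (by omega)
              simp [hi1, e4]
              linear_combination hA + z
            · by_cases h6 : n = 6
              · subst h6
                simp [hi1, e4]
                linear_combination hA
              · simp [hi1, e4, show ¬((4:ℕ) = n - 2) from by omega, show 4 + 2 < n from by omega]
                linear_combination hA
          · -- j ≥ 5
            have hj5 : 5 ≤ j.val := by omega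
            have hA := relA hc hs hn (j.val - 1) (by omega) (by omega)
            rw [show j.val - 1 + 2 = j.val + 1 from by omega,
              show j.val - 1 + 1 = j.val from by omega] at hA
            have hrow := row2_zero hc hs hn (j.val - 1) (by omega)
            have nj0 : ¬(j.val = 0) := by omega
            have nj1 : ¬(j.val = 1) := by omega
            have n1n1 : ¬((1:ℕ) = n - 1) := by omega
            have n1n2 : ¬((1:ℕ) = n - 2) := by omega
            by_cases ejn2 : j.val = n - 2
            · rw [show (n:ℕ) - 1 = j.val + 1 from by omega]
              have hX : (n:ℕ) - 2 = j.val := ejn2.symm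
              simp [hi1, e2, e3, e4, hX, hj2, nj0, nj1, n1n1, n1n2,
                show ¬(j.val + 2 < n) from by omega]
              linear_combination hA - hrow
            · by_cases ejn1 : j.val = n - 1
              · have z : AA a 0 (j.val + 1) = 0 := AA_zero (by omega)
                simp [hi1, e2, e4, ejn2, hj2, nj0, nj1, n1n1, n1n2,
                  show ¬(j.val + 2 < n) from by omega]
                linear_combination hA - hrow + z
              · simp [hi1, e2, e4, ejn2, hj2, nj0, nj1, n1n1, n1n2,
                  show j.val + 2 < n from by omega, show 2 ≤ j.val + 2 from by omega]
                linear_combination hA - hrow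
    · by_cases e23 : i.val = 2 ∧ j.val = 3
      · simp [e23.1, e23.2, show ¬((2:ℕ) = 0) from by omega]
      · have hz := regionAll hc hs hn i.val j.val (by omega) hij e23
        rw [hz]
        simp [hi0, hi1, e23, show ¬(i.val = 4 ∧ j.val = 1) from by omega,
          show ¬(i.val = 3 ∧ j.val = 2) from by omega, show ¬(j.val = 0) from by omega,
          show ¬(j.val = 1) from by omega, show ¬(i.val = 1 ∧ j.val = 2) from by omega,
          show ¬(i.val = 2 ∧ j.val = 1) from by omega,
          show ¬(i.val = 1 ∧ j.val = 4) from by omega,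
          show ¬(i.val = 0 ∧ j.val = n - 1) from by omega,
          show ¬(i.val = 1 ∧ j.val = n - 2) from by omega,
          show ¬(j.val = 0 ∧ i.val = n - 1) from by omega,
          show ¬(j.val = 1 ∧ i.val = n - 2) from by omega]


set_option maxHeartbeats 1000000 in
lemma omega_anti (hn : 5 ≤ n) (k : Fin 3) (p q : Fin n) :
    m2Omega K n k p q = -m2Omega K n k q p := by
  unfold m2Omega
  split_ifs <;> first | omega | (norm_num; done) | simp_all

lemma sum_swap1 (g : Fin n → K) (i j : Fin n) :
    (∑ m, m2c K n i j m * g m) = -∑ m, m2c K n j i m * g m := by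
  rw [← Finset.sum_neg_distrib]
  exact Finset.sum_congr rfl fun m _ => by rw [m2c_swap j i m]; ring

lemma partII (hn : 5 ≤ n) (a : Fin n → Fin n → K) (hs : ∀ i j, a i j = -a j i)
    (hc : m2Closed K n a) :
    ∃ (coef : Fin 3 → K) (f : Fin n → K),
      ∀ i j, a i j = (∑ k, coef k * m2Omega K n k i j) + ∑ m, m2c K n i j m * f m := by
  refine ⟨![AA a 0 (n - 1), AA a 1 2 - AA a 0 3, -AA a 2 3],
    fun m : Fin n => if 2 ≤ m.val then AA a 0 (m.val - 1) else 0, ?_⟩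
  have hsum : ∀ p q : Fin n,
      (∑ k, ![AA a 0 (n - 1), AA a 1 2 - AA a 0 3, -AA a 2 3] k * m2Omega K n k p q)
        = AA a 0 (n - 1) * m2Omega K n 0 p q + (AA a 1 2 - AA a 0 3) * m2Omega K n 1 p q
          + (-AA a 2 3) * m2Omega K n 2 p q := by
    intro p q
    rw [Fin.sum_univ_three]
    norm_num
    change (-AA a 2 3) * m2Omega K n 2 p q = _
    ring
  intro i j
  rw [hsum]
  rcases lt_trichotomy i.val j.val with h | h | h
  · exact key_lt hn a hs hc i j h
  · have hij : i = j := Fin.ext h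
    subst hij
    have hz : a i i = 0 := by have := hs i i; linear_combination this / 2
    rw [hz, bracketSum1, om0_def, om1_def, om2_def]
    simp [show ¬(i.val = 0 ∧ i.val = n - 1) from by omega,
      show ¬(i.val = 1 ∧ i.val = n - 2) from by omega,
      show ¬(i.val = 1 ∧ i.val = 2) from by omega,
      show ¬(i.val = 2 ∧ i.val = 1) from by omega,
      show ¬(i.val = 1 ∧ i.val = 4) from by omega,
      show ¬(i.val = 4 ∧ i.val = 1) from by omega,
      show ¬(i.val = 2 ∧ i.val = 3) from by omega,
      show ¬(i.val = 3 ∧ i.val = 2) from by omega,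
      show ¬(i.val = 0 ∧ 1 ≤ i.val) from by omega,
      show ¬(i.val = 1 ∧ 2 ≤ i.val) from by omega]
  · have h1 := key_lt hn a hs hc j i h
    rw [hs i j, h1]
    rw [omega_anti hn 0 i j, omega_anti hn 1 i j, omega_anti hn 2 i j,
      sum_swap1 _ i j]
    ring


lemma partIII (hn : 5 ≤ n) (coef : Fin 3 → K) (f : Fin n → K)
    (h : ∀ i j, (∑ k, coef k * m2Omega K n k i j) = ∑ m, m2c K n i j m * f m) :
    coef = 0 := by
  have hsum : ∀ p q : Fin n, (∑ k, coef k * m2Omega K n k p q)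
      = coef 0 * m2Omega K n 0 p q + coef 1 * m2Omega K n 1 p q
        + coef 2 * m2Omega K n 2 p q := fun p q => Fin.sum_univ_three _
  -- coef 2 = 0 from (2,3)
  have h23 := h ⟨2, by omega⟩ ⟨3, by omega⟩
  rw [hsum, bracketSum1, om0_def, om1_def, om2_def] at h23
  simp only [Fin.val_mk] at h23
  norm_num at h23
  -- coef 0 = 0 from (0, n-1)
  have h0n := h ⟨0, by omega⟩ ⟨n - 1, by omega⟩
  rw [hsum, bracketSum1, om0_def, om1_def, om2_def] at h0n
  simp only [Fin.val_mk] at h0n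
  simp [show ¬((n:ℕ) - 1 = 0) from by omega, show ¬((n:ℕ) - 1 = 1) from by omega,
    show (1:ℕ) ≤ n - 1 from by omega, show ¬(n - 1 + 1 < n) from by omega, h23] at h0n
  -- coef 1 = 0 from (1,2) and (0,3)
  have h12 := h ⟨1, by omega⟩ ⟨2, by omega⟩
  have h03 := h ⟨0, by omega⟩ ⟨3, by omega⟩
  have hcc : ∀ m : Fin n, m2c K n ⟨1, by omega⟩ ⟨2, by omega⟩ m
      = m2c K n ⟨0, by omega⟩ ⟨3, by omega⟩ m := by
    intro m
    unfold m2c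
    norm_num
  have hDD : (∑ m, m2c K n (⟨1, by omega⟩ : Fin n) ⟨2, by omega⟩ m * f m)
      = ∑ m, m2c K n (⟨0, by omega⟩ : Fin n) ⟨3, by omega⟩ m * f m :=
    Finset.sum_congr rfl fun m _ => by rw [hcc m]
  rw [hsum, hDD, ← h03, hsum] at h12
  rw [om0_def, om1_def, om2_def, om0_def, om1_def, om2_def] at h12
  simp only [Fin.val_mk] at h12
  simp [show ¬((2:ℕ) = n - 2) from by omega, show ¬((3:ℕ) = n - 1) from by omega, h23] at h12
  -- conclude
  funext k
  fin_cases k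
  · simpa using h0n
  · simpa using h12
  · simpa using h23

end Stmt10Aux

/-- For `n ≥ 5`, `dim H²(𝔪₂(n); K) = 3`, with basis given by the
classes of `e¹∧eⁿ + e²∧e^{n-1}`, `e²∧e³`, `e²∧e⁵ - e³∧e⁴`:
(i) each is a cocycle; (ii) every antisymmetric closed 2-form is a linear
combination of them plus a coboundary; (iii) they are independent modulo
coboundaries. -/
theorem stmt10 (K : Type*) [Field K] [CharZero K] (n : ℕ) (hn : 5 ≤ n) :
    (∀ k, m2Closed K n (m2Omega K n k)) ∧
    (∀ a : Fin n → Fin n → K, (∀ i j, a i j = - a j i) → m2Closed K n a →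
      ∃ (coef : Fin 3 → K) (f : Fin n → K),
        ∀ i j, a i j = (∑ k, coef k * m2Omega K n k i j) + ∑ m, m2c K n i j m * f m) ∧
    (∀ (coef : Fin 3 → K) (f : Fin n → K),
      (∀ i j, (∑ k, coef k * m2Omega K n k i j) = ∑ m, m2c K n i j m * f m) →
      coef = 0) := by
  exact ⟨fun k => Stmt10Aux.omega_closed hn k,
    fun a hs hc => Stmt10Aux.partII hn a hs hc,
    fun coef f h => Stmt10Aux.partIII hn coef f h⟩
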